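/- For every unitary U in SU(2) there exist A, B in SU(2) with A B A† B† = U; in particular one can take A = W exp(iθZ/2) W† and B = i W X W†, where U = W exp(iθZ) W† is a diagonalization of U. -/

import Mathlib

open Matrix

noncomputable section

/-- Matrix exponential, defined by its power series. -/
def mexp {m : Type*} [Fintype m] [DecidableEq m] (A : Matrix m m ℂ) : Matrix m m ℂ :=
  ∑' k : ℕ, ((k.factorial : ℂ)⁻¹) • A ^ k

/-- Pauli X. -/
def PX : Matrix (Fin 2) (Fin 2) ℂ := !![0, 1; 1, 0]
/-- Pauli Z. -/
def PZ : Matrix (Fin 2) (Fin 2) ℂ := !![1, 0; 0, -1]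

lemma mexp_smul_PZ (c : ℂ) : mexp (c • PZ) = !![Complex.exp c, 0; 0, Complex.exp (-c)] := by
  have hPZ : c • PZ = Matrix.diagonal ![c, -c] := by
    ext i j; fin_cases i <;> fin_cases j <;> simp [PZ, Matrix.diagonal]
  have h2 : ∀ k : ℕ, ((k.factorial : ℂ)⁻¹) • (Matrix.diagonal ![c, -c]) ^ k
      = Matrix.diagonal ((k.factorial : ℂ)⁻¹ • (![c, -c] ^ k)) := by
    intro k; rw [Matrix.diagonal_pow, Matrix.diagonal_smul]
  rw [mexp, hPZ]
  simp_rw [h2]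
  rw [← Matrix.diagonal_tsum]
  have key : ∀ z : ℂ, ∑' (k : ℕ), ((k.factorial : ℂ)⁻¹ • (z ^ k)) = Complex.exp z := by
    intro z
    rw [Complex.exp_eq_exp_ℂ, NormedSpace.exp_eq_tsum ℂ]
  have : (∑' (k : ℕ), (k.factorial : ℂ)⁻¹ • (![c, -c] ^ k)) = ![Complex.exp c, Complex.exp (-c)] := by
    funext i
    rw [tsum_apply]
    · fin_cases i <;> simpa using key _
    · apply Pi.summable.mpr
      intro i
      have := (NormedSpace.expSeries_summable' (𝕂 := ℂ) (![c,-c] i))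
      simpa [NormedSpace.expSeries_apply_eq] using this
  rw [this]
  ext i j; fin_cases i <;> fin_cases j <;> simp [Matrix.diagonal]

lemma conj_exp_I_mul (z : ℂ) (hz : (starRingEnd ℂ) z = -z) :
    (starRingEnd ℂ) (Complex.exp z) = Complex.exp (-z) := by
  rw [← Complex.exp_conj, hz]

lemma PX_conjTranspose : PXᴴ = PX := by
  ext i j; fin_cases i <;> fin_cases j <;> simp [PX]

lemma PX_mul_PX : PX * PX = 1 := by
  rw [PX, Matrix.mul_fin_two, Matrix.one_fin_two]; norm_num

lemma commutator_key (W : Matrix (Fin 2) (Fin 2) ℂ) (θ : ℝ)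
    (hW : W ∈ Matrix.unitaryGroup (Fin 2) ℂ) :
    (W * mexp ((Complex.I * (θ / 2)) • PZ) * Wᴴ) * (Complex.I • (W * PX * Wᴴ)) *
      (W * mexp ((Complex.I * (θ / 2)) • PZ) * Wᴴ)ᴴ * (Complex.I • (W * PX * Wᴴ))ᴴ
    = W * mexp ((Complex.I * θ) • PZ) * Wᴴ := by
  have hW1 : Wᴴ * W = 1 := by
    simpa [Matrix.star_eq_conjTranspose] using hW.1
  have col : ∀ A B : Matrix (Fin 2) (Fin 2) ℂ,
      (W * A * Wᴴ) * (W * B * Wᴴ) = W * (A * B) * Wᴴ := by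
    intro A B
    calc (W * A * Wᴴ) * (W * B * Wᴴ) = W * A * (Wᴴ * W) * B * Wᴴ := by
          simp only [Matrix.mul_assoc]
      _ = W * (A * B) * Wᴴ := by rw [hW1, Matrix.mul_one]; simp [Matrix.mul_assoc]
  set c2 : ℂ := Complex.I * (θ / 2) with hc2
  have hc2conj : (starRingEnd ℂ) c2 = -c2 := by
    simp [hc2, _root_.map_mul, Complex.conj_I, map_div₀, Complex.conj_ofReal, map_ofNat]
  rw [mexp_smul_PZ, mexp_smul_PZ]
  set e1 : ℂ := Complex.exp c2 with he1
  set e2 : ℂ := Complex.exp (-c2) with he2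
  set D2 : Matrix (Fin 2) (Fin 2) ℂ := !![e1, 0; 0, e2] with hD2
  have hD2h : D2ᴴ = !![e2, 0; 0, e1] := by
    ext i j; fin_cases i <;> fin_cases j <;>
      simp [hD2, e1, e2, conj_exp_I_mul _ hc2conj, ← Complex.exp_conj, hc2conj]
  have hmid : D2 * PX * D2ᴴ * PX = !![Complex.exp (Complex.I * θ), 0; 0, Complex.exp (-(Complex.I * θ))] := by
    rw [hD2h, hD2, PX]
    rw [Matrix.mul_fin_two, Matrix.mul_fin_two, Matrix.mul_fin_two]
    have h1 : e1 * e1 = Complex.exp (Complex.I * θ) := by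
      rw [he1, ← Complex.exp_add]; congr 1; rw [hc2]; ring
    have h2 : e2 * e2 = Complex.exp (-(Complex.I * θ)) := by
      rw [he2, ← Complex.exp_add]; congr 1; rw [hc2]; ring
    norm_num [h1, h2]
  -- handle scalars
  have hBh : (Complex.I • (W * PX * Wᴴ))ᴴ = (-Complex.I) • (W * PX * Wᴴ) := by
    rw [Matrix.conjTranspose_smul]
    simp [Matrix.conjTranspose_mul, PX_conjTranspose, Complex.conj_I, Matrix.mul_assoc]
  have hAh : (W * D2 * Wᴴ)ᴴ = W * D2ᴴ * Wᴴ := by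
    simp [Matrix.conjTranspose_mul, Matrix.mul_assoc]
  rw [hBh, hAh]
  simp only [mul_smul_comm, smul_mul_assoc, smul_smul]
  rw [show -Complex.I * Complex.I = (1:ℂ) by simp [Complex.I_mul_I], one_smul]
  rw [col, col, col, hmid]

lemma diag_su2 (U : Matrix (Fin 2) (Fin 2) ℂ)
    (hU : U ∈ Matrix.unitaryGroup (Fin 2) ℂ) (hdet : U.det = 1) :
    ∃ (W : Matrix (Fin 2) (Fin 2) ℂ) (θ : ℝ), W ∈ Matrix.unitaryGroup (Fin 2) ℂ ∧
      U = W * mexp ((Complex.I * θ) • PZ) * Wᴴ := by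
  -- structure of U
  have hadj : Uᴴ = U.adjugate := by
    have h1 : U * U.adjugate = 1 := by rw [Matrix.mul_adjugate, hdet, one_smul]
    have h2 : Uᴴ * U = 1 := by simpa [Matrix.star_eq_conjTranspose] using hU.1
    calc Uᴴ = Uᴴ * (U * U.adjugate) := by rw [h1, Matrix.mul_one]
      _ = (Uᴴ * U) * U.adjugate := by rw [Matrix.mul_assoc]
      _ = U.adjugate := by rw [h2, Matrix.one_mul]
  set a : ℂ := U 0 0 with ha
  set b : ℂ := U 0 1 with hb
  have hd : U 1 1 = (starRingEnd ℂ) a := by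
    have := congrFun (congrFun hadj 0) 0
    simp [Matrix.adjugate_fin_two, Matrix.conjTranspose_apply, ha] at this
    rw [← this]
  have hcL : U 1 0 = -(starRingEnd ℂ) b := by
    have := congrFun (congrFun hadj 0) 1
    simp [Matrix.adjugate_fin_two, Matrix.conjTranspose_apply] at this
    rw [← Complex.conj_conj (U 1 0), this, map_neg, ← hb]
  have hUeq : U = !![a, b; -(starRingEnd ℂ) b, (starRingEnd ℂ) a] := by
    ext i j; fin_cases i <;> fin_cases j <;> simp [ha, hb, hd, hcL]
  have hnorm : a * (starRingEnd ℂ) a + b * (starRingEnd ℂ) b = 1 := by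
    have hdet2 := U.det_fin_two
    rw [hdet, hd, hcL, ← ha, ← hb] at hdet2
    linear_combination -hdet2
  -- real bounds
  have hnormR : Complex.normSq a + Complex.normSq b = 1 := by
    have : ((Complex.normSq a + Complex.normSq b : ℝ) : ℂ) = ((1:ℝ):ℂ) := by
      push_cast
      rw [← Complex.mul_conj, ← Complex.mul_conj]; exact hnorm
    exact_mod_cast this
  have hre1 : -1 ≤ a.re := by
    have h1 : a.re ^ 2 ≤ 1 := by
      have := Complex.normSq_nonneg b
      have h2 : Complex.normSq a = a.re * a.re + a.im * a.im := Complex.normSq_apply a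
      nlinarith [sq_nonneg a.im]
    nlinarith
  have hre2 : a.re ≤ 1 := by
    have h1 : a.re ^ 2 ≤ 1 := by
      have := Complex.normSq_nonneg b
      have h2 : Complex.normSq a = a.re * a.re + a.im * a.im := Complex.normSq_apply a
      nlinarith [sq_nonneg a.im]
    nlinarith
  set θ : ℝ := Real.arccos a.re with hθ
  set l : ℂ := Complex.exp (Complex.I * θ) with hl
  have hIθ : (starRingEnd ℂ) (Complex.I * (θ:ℂ)) = -(Complex.I * θ) := by
    simp [_root_.map_mul, Complex.conj_I, Complex.conj_ofReal]
  have hlc : (starRingEnd ℂ) l = Complex.exp (-(Complex.I * θ)) := by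
    rw [hl, conj_exp_I_mul _ hIθ]
  have hl1 : l * (starRingEnd ℂ) l = 1 := by
    rw [hlc, hl, ← Complex.exp_add]; simp
  have hl2 : l + (starRingEnd ℂ) l = a + (starRingEnd ℂ) a := by
    have hcos : Real.cos θ = a.re := Real.cos_arccos hre1 hre2
    have h1 : l + (starRingEnd ℂ) l = ((2 * Real.cos θ : ℝ) : ℂ) := by
      rw [hlc, hl, show Complex.I * (θ:ℂ) = (θ:ℂ) * Complex.I by ring, Complex.exp_mul_I,
        show -((θ:ℂ) * Complex.I) = ((-θ : ℝ) : ℂ) * Complex.I by push_cast; ring,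
        Complex.exp_mul_I]
      simp [Complex.cos_neg, Complex.sin_neg, ← Complex.ofReal_cos, ← Complex.ofReal_sin]
      ring
    rw [h1, hcos, Complex.add_conj]
  set m : ℂ := l - a with hm
  have hmc : (starRingEnd ℂ) m = (starRingEnd ℂ) l - (starRingEnd ℂ) a := by
    rw [hm, map_sub]
  by_cases hdeg : b = 0 ∧ m = 0
  · -- degenerate: U is already diagonal
    refine ⟨1, θ, one_mem _, ?_⟩
    rw [mexp_smul_PZ]
    have hal : a = l := by have := hdeg.2; rw [hm] at this; linear_combination -this
    rw [Matrix.one_mul, Matrix.conjTranspose_one, Matrix.mul_one, hUeq, hdeg.1, hal, ← hlc]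
    simp
    exact hl
  · -- nondegenerate
    set s : ℝ := Complex.normSq b + Complex.normSq m with hs
    have hspos : 0 < s := by
      rcases not_and_or.mp hdeg with h | h
      · have := Complex.normSq_pos.mpr h
        have := Complex.normSq_nonneg m
        rw [hs]; linarith
      · have := Complex.normSq_pos.mpr h
        have := Complex.normSq_nonneg b
        rw [hs]; linarith
    have hsC : (s:ℂ) = b * (starRingEnd ℂ) b + m * (starRingEnd ℂ) m := by
      rw [Complex.mul_conj, Complex.mul_conj, hs]; push_cast; ring
    set ν : ℂ := ((Real.sqrt s : ℝ) : ℂ) with hν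
    have hνν : ν * ν = (s:ℂ) := by
      rw [hν, ← Complex.ofReal_mul, Real.mul_self_sqrt hspos.le]
    have hνne : ν ≠ 0 := by
      rw [hν, Complex.ofReal_ne_zero]
      exact (Real.sqrt_pos.mpr hspos).ne'
    have hνconj : (starRingEnd ℂ) ν = ν := Complex.conj_ofReal _
    have hsne : (s:ℂ) ≠ 0 := by
      rw [Complex.ofReal_ne_zero]; exact hspos.ne'
    set D : Matrix (Fin 2) (Fin 2) ℂ := !![l, 0; 0, (starRingEnd ℂ) l] with hD
    set V : Matrix (Fin 2) (Fin 2) ℂ := !![b, -(starRingEnd ℂ) m; m, (starRingEnd ℂ) b] with hV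
    have hVh : Vᴴ = !![(starRingEnd ℂ) b, (starRingEnd ℂ) m; -m, b] := by
      rw [hV]; ext i j; fin_cases i <;> fin_cases j <;> simp
    have hUV : U * V = V * D := by
      rw [hUeq, hV, hD, Matrix.mul_fin_two, Matrix.mul_fin_two]
      ext i j; fin_cases i <;> fin_cases j <;> simp
      · linear_combination b * hm
      · linear_combination ((starRingEnd ℂ) l - a) * hmc + hnorm + (starRingEnd ℂ) l * hl2 - hl1
      · linear_combination ((starRingEnd ℂ) a - l) * hm - hnorm - l * hl2 + hl1
      · linear_combination (starRingEnd ℂ) b * hmc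
    have hVV : V * Vᴴ = (s:ℂ) • 1 := by
      rw [hV, hVh, Matrix.mul_fin_two]
      ext i j; fin_cases i <;> fin_cases j <;> simp [Matrix.one_apply]
      · linear_combination -hsC - (starRingEnd ℂ) m * hm
      · ring
      · ring
      · linear_combination -hsC - (starRingEnd ℂ) m * hm
    have hstar : star ν⁻¹ = ν⁻¹ := by
      rw [Complex.star_def, map_inv₀, hνconj]
    refine ⟨ν⁻¹ • V, θ, ?_, ?_⟩
    · rw [Matrix.mem_unitaryGroup_iff]
      rw [Matrix.star_eq_conjTranspose, Matrix.conjTranspose_smul, hstar]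
      rw [smul_mul_assoc, mul_smul_comm, hVV, smul_smul, smul_smul, ← mul_inv, hνν,
        inv_mul_cancel₀ hsne, one_smul]
    · rw [mexp_smul_PZ, Matrix.conjTranspose_smul]
      rw [hstar]
      rw [← hlc, ← hl, ← hD]
      rw [smul_mul_assoc, smul_mul_assoc, mul_smul_comm, smul_smul, ← mul_inv, hνν]
      rw [← hUV, Matrix.mul_assoc, hVV, mul_smul_comm, Matrix.mul_one,
        smul_smul, inv_mul_cancel₀ hsne, one_smul]

/-- **Every `U ∈ SU(2)` is a commutator `A B A† B†` with `A, B ∈ SU(2)`.**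
In particular, if `U = W exp(iθZ) W†` is a diagonalization of `U`, then one may take
`A = W exp(iθZ/2) W†` and `B = i W X W†`. -/
theorem su2_is_commutator (U : Matrix (Fin 2) (Fin 2) ℂ)
    (hU : U ∈ Matrix.unitaryGroup (Fin 2) ℂ) (hdet : U.det = 1) :
    (∃ A B : Matrix (Fin 2) (Fin 2) ℂ,
      A ∈ Matrix.unitaryGroup (Fin 2) ℂ ∧ A.det = 1 ∧
      B ∈ Matrix.unitaryGroup (Fin 2) ℂ ∧ B.det = 1 ∧
      A * B * Aᴴ * Bᴴ = U) ∧
    ∀ (W : Matrix (Fin 2) (Fin 2) ℂ) (θ : ℝ),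
      W ∈ Matrix.unitaryGroup (Fin 2) ℂ →
      U = W * mexp ((Complex.I * θ) • PZ) * Wᴴ →
      (W * mexp ((Complex.I * (θ / 2)) • PZ) * Wᴴ) * (Complex.I • (W * PX * Wᴴ)) *
        (W * mexp ((Complex.I * (θ / 2)) • PZ) * Wᴴ)ᴴ * (Complex.I • (W * PX * Wᴴ))ᴴ = U := by
  constructor
  · obtain ⟨W, θ, hW, hdiag⟩ := diag_su2 U hU hdet
    have hW1 : Wᴴ * W = 1 := by simpa [Matrix.star_eq_conjTranspose] using hW.1
    have hW2 : W * Wᴴ = 1 := by simpa [Matrix.star_eq_conjTranspose] using hW.2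
    have hdetWW : W.det * Wᴴ.det = 1 := by
      rw [← Matrix.det_mul, hW2, Matrix.det_one]
    set c2 : ℂ := Complex.I * ((θ:ℂ) / 2) with hc2
    have hc2conj : (starRingEnd ℂ) c2 = -c2 := by
      simp [hc2, _root_.map_mul, Complex.conj_I, map_div₀, Complex.conj_ofReal, map_ofNat]
    set D2 : Matrix (Fin 2) (Fin 2) ℂ := mexp (c2 • PZ) with hD2def
    have hD2 : D2 = !![Complex.exp c2, 0; 0, Complex.exp (-c2)] := by
      rw [hD2def, mexp_smul_PZ]
    have hD2h : D2ᴴ = !![Complex.exp (-c2), 0; 0, Complex.exp c2] := by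
      rw [hD2]; ext i j; fin_cases i <;> fin_cases j <;>
        simp [conj_exp_I_mul _ hc2conj, ← Complex.exp_conj, hc2conj]
    have hD2D2h : D2 * D2ᴴ = 1 := by
      rw [hD2h, hD2, Matrix.mul_fin_two, Matrix.one_fin_two]
      norm_num [← Complex.exp_add]
    have hdetD2 : D2.det = 1 := by
      rw [hD2, Matrix.det_fin_two_of, ← Complex.exp_add]
      norm_num
    refine ⟨W * D2 * Wᴴ, Complex.I • (W * PX * Wᴴ), ?_, ?_, ?_, ?_, ?_⟩
    · rw [Matrix.mem_unitaryGroup_iff, Matrix.star_eq_conjTranspose]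
      have h1 : (W * D2 * Wᴴ)ᴴ = W * D2ᴴ * Wᴴ := by
        simp [Matrix.conjTranspose_mul, Matrix.mul_assoc]
      rw [h1]
      calc (W * D2 * Wᴴ) * (W * D2ᴴ * Wᴴ) = W * D2 * (Wᴴ * W) * D2ᴴ * Wᴴ := by
            simp only [Matrix.mul_assoc]
        _ = W * (D2 * D2ᴴ) * Wᴴ := by rw [hW1, Matrix.mul_one]; simp only [Matrix.mul_assoc]
        _ = 1 := by rw [hD2D2h, Matrix.mul_one, hW2]
    · rw [Matrix.det_mul, Matrix.det_mul, hdetD2, mul_one, hdetWW]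
    · rw [Matrix.mem_unitaryGroup_iff, Matrix.star_eq_conjTranspose]
      have h1 : (Complex.I • (W * PX * Wᴴ))ᴴ = (-Complex.I) • (W * PX * Wᴴ) := by
        rw [Matrix.conjTranspose_smul]
        simp [Matrix.conjTranspose_mul, PX_conjTranspose, Complex.conj_I, Matrix.mul_assoc]
      rw [h1]
      simp only [mul_smul_comm, smul_mul_assoc, smul_smul]
      rw [show -Complex.I * Complex.I = (1:ℂ) by simp [Complex.I_mul_I], one_smul]
      calc (W * PX * Wᴴ) * (W * PX * Wᴴ) = W * PX * (Wᴴ * W) * PX * Wᴴ := by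
            simp only [Matrix.mul_assoc]
        _ = W * (PX * PX) * Wᴴ := by rw [hW1, Matrix.mul_one]; simp only [Matrix.mul_assoc]
        _ = 1 := by rw [PX_mul_PX, Matrix.mul_one, hW2]
    · rw [Matrix.det_smul, Matrix.det_mul, Matrix.det_mul]
      have hPXdet : PX.det = -1 := by
        rw [PX, Matrix.det_fin_two_of]; norm_num
      rw [hPXdet]
      have : W.det * -1 * Wᴴ.det = -1 := by
        rw [mul_comm W.det (-1), mul_assoc, hdetWW]; ring
      rw [this]
      simp [Complex.I_sq]
    · rw [hD2def, hc2]
      rw [commutator_key W θ hW, ← hdiag]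
  · intro W θ hW hdiag
    rw [commutator_key W θ hW, ← hdiag]

end
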